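/- Let S be the set of binary sequences of the form φ(x) consisting of runs of 0's of lengths d_1(x), d_2(x), d_3(x), ... separated by single 1's, where d_n(x) = ∏_{j=1}^n r_j(x) and r_j(x) = 3^(2^(j-1)) if x_j = 0, r_j(x) = 5^(2^(j-1)) if x_j = 1. If s = φ(x) and t = φ(y) satisfy s_{a+m} = t_{b+m} for all m > 0 for some a, b, then x = y (and hence s = t). -/
import Mathlib


open scoped Classical

def r (x : ℕ → Fin 2) (j : ℕ) : ℕ :=
  if x j = 0 then 3 ^ (2 ^ j) else 5 ^ (2 ^ j)

def d (x : ℕ → Fin 2) (n : ℕ) : ℕ :=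
  ∏ j ∈ Finset.range n, r x j

/-- `phi x` is the binary sequence `0^{d_1} 1 0^{d_2} 1 0^{d_3} 1 ⋯`: the `(n+1)`-st
`1` occurs at (0-indexed) position `d_1 + ⋯ + d_{n+1} + n`. -/
noncomputable def phi (x : ℕ → Fin 2) (k : ℕ) : Fin 2 :=
  if ∃ n : ℕ, k = (∑ j ∈ Finset.range (n + 1), d x (j + 1)) + n then 1 else 0

/-- Position of the `(n+1)`-st `1` in `phi x`. -/
def P (x : ℕ → Fin 2) (n : ℕ) : ℕ := (∑ j ∈ Finset.range (n + 1), d x (j + 1)) + n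

lemma r_pos (x : ℕ → Fin 2) (j : ℕ) : 0 < r x j := by
  unfold r; split <;> positivity

lemma d_pos (x : ℕ → Fin 2) (n : ℕ) : 0 < d x n :=
  Finset.prod_pos fun j _ => r_pos x j

lemma P_succ (x : ℕ → Fin 2) (n : ℕ) :
    P x (n + 1) = P x n + (d x (n + 2) + 1) := by
  unfold P
  rw [Finset.sum_range_succ]
  ring

lemma P_strictMono (x : ℕ → Fin 2) : StrictMono (P x) :=
  strictMono_nat_of_lt_succ fun n => by
    have := d_pos x (n + 2); rw [P_succ]; omega

lemma lt_P (x : ℕ → Fin 2) (n : ℕ) : n < P x n := by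
  induction n with
  | zero =>
    have := d_pos x 1
    unfold P
    simp
    omega
  | succ n ih => rw [P_succ]; have := d_pos x (n + 2); omega

lemma phi_eq_one (x : ℕ → Fin 2) (k : ℕ) : phi x k = 1 ↔ ∃ n, k = P x n := by
  unfold phi P
  split
  · case isTrue h => exact iff_of_true rfl h
  · case isFalse h => exact iff_of_false (by decide) h

lemma two_pow_sum (n : ℕ) : ∑ j ∈ Finset.range n, 2 ^ j = 2 ^ n - 1 := by
  induction n with
  | zero => simp
  | succ n ih =>
    rw [Finset.sum_range_succ, ih, pow_succ]
    have : 0 < 2 ^ n := pow_pos (by norm_num) n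
    omega

lemma fact_r_3 (x : ℕ → Fin 2) (j : ℕ) :
    (r x j).factorization 3 = if x j = 0 then 2 ^ j else 0 := by
  unfold r
  split
  · rw [Nat.Prime.factorization_pow Nat.prime_three]
    simp
  · rw [Nat.Prime.factorization_pow (by norm_num : Nat.Prime 5)]
    simp [Finsupp.single_apply]

lemma fact_r_5 (x : ℕ → Fin 2) (j : ℕ) :
    (r x j).factorization 5 = if x j = 0 then 0 else 2 ^ j := by
  unfold r
  split
  · rw [Nat.Prime.factorization_pow Nat.prime_three]
    simp [Finsupp.single_apply]
  · rw [Nat.Prime.factorization_pow (by norm_num : Nat.Prime 5)]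
    simp

lemma fact_d (x : ℕ → Fin 2) (n p : ℕ) :
    (d x n).factorization p = ∑ j ∈ Finset.range n, (r x j).factorization p := by
  unfold d
  rw [Nat.factorization_prod (fun j _ => (r_pos x j).ne')]
  exact Finset.sum_apply' p

lemma fact_d_sum (x : ℕ → Fin 2) (n : ℕ) :
    (d x n).factorization 3 + (d x n).factorization 5 = 2 ^ n - 1 := by
  rw [fact_d, fact_d, ← Finset.sum_add_distrib, ← two_pow_sum]
  apply Finset.sum_congr rfl
  intro j _
  rw [fact_r_3, fact_r_5]
  split <;> simp

lemma d_index_inj {x y : ℕ → Fin 2} {n m : ℕ} (hd : d x n = d y m) : n = m := by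
  have h1 := fact_d_sum x n
  have h2 := fact_d_sum y m
  rw [hd] at h1
  have hn : 0 < 2 ^ n := pow_pos (by norm_num) n
  have hm : 0 < 2 ^ m := pow_pos (by norm_num) m
  have h3 : (2 : ℕ) ^ n = 2 ^ m := by omega
  exact Nat.pow_right_injective (le_refl 2) h3

lemma fin2_eq (v : Fin 2) : v = 0 ∨ v = 1 := by revert v; decide

lemma binsum_lt (x : ℕ → Fin 2) (n : ℕ) :
    (∑ j ∈ Finset.range n, if x j = 0 then 2 ^ j else 0) < 2 ^ n := by
  have h1 : (∑ j ∈ Finset.range n, if x j = 0 then 2 ^ j else 0)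
      ≤ ∑ j ∈ Finset.range n, 2 ^ j :=
    Finset.sum_le_sum (fun j _ => by split <;> simp)
  rw [two_pow_sum] at h1
  have : 0 < 2 ^ n := pow_pos (by norm_num) n
  omega

lemma binary_unique (x y : ℕ → Fin 2) :
    ∀ n, (∑ j ∈ Finset.range n, if x j = 0 then 2 ^ j else 0) =
         (∑ j ∈ Finset.range n, if y j = 0 then 2 ^ j else 0) →
    ∀ j < n, x j = y j := by
  intro n
  induction n with
  | zero => intro _ j hj; omega
  | succ n ih =>
    intro hsum j hj
    rw [Finset.sum_range_succ, Finset.sum_range_succ] at hsum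
    have bx := binsum_lt x n
    have by' := binsum_lt y n
    rcases fin2_eq (x n) with hx | hx <;> rcases fin2_eq (y n) with hy | hy
    · rw [if_pos hx, if_pos hy] at hsum
      rcases Nat.lt_succ_iff_lt_or_eq.mp hj with hc | hc
      · exact ih (by omega) j hc
      · subst hc; rw [hx, hy]
    · rw [if_pos hx, if_neg (by rw [hy]; decide)] at hsum; omega
    · rw [if_neg (by rw [hx]; decide), if_pos hy] at hsum; omega
    · rw [if_neg (by rw [hx]; decide), if_neg (by rw [hy]; decide)] at hsum
      rcases Nat.lt_succ_iff_lt_or_eq.mp hj with hc | hc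
      · exact ih (by omega) j hc
      · subst hc; rw [hx, hy]

/-- If `phi x` and `phi y` agree after shifts (for all `m > 0`), then `x = y`
(and hence `phi x = phi y`). -/
theorem stmt11 (x y : ℕ → Fin 2) (a b : ℕ)
    (h : ∀ m : ℕ, 0 < m → phi x (a + m) = phi y (b + m)) :
    x = y ∧ phi x = phi y := by
  have H : ∀ m, 0 < m → ((∃ n, a + m = P x n) ↔ (∃ n, b + m = P y n)) := by
    intro m hm
    rw [← phi_eq_one x (a + m), ← phi_eq_one y (b + m), h m hm]
  have hPa := lt_P x a
  obtain ⟨m₀, hm₀⟩ := (H (P x a - a) (by omega)).mp ⟨a, by omega⟩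
  have key : ∀ k, P x (a + k) + b = P y (m₀ + k) + a := by
    intro k
    induction k with
    | zero => simp only [Nat.add_zero]; omega
    | succ k ih =>
      show P x (a + k + 1) + b = P y (m₀ + k + 1) + a
      have h1 : a < P x (a + k) := lt_of_le_of_lt (Nat.le_add_right a k) (lt_P x (a + k))
      have h2 : P x (a + k + 1) = P x (a + k) + (d x (a + k + 2) + 1) := P_succ x (a + k)
      have h3 : b < P y (m₀ + k) := by omega
      have hdx := d_pos x (a + k + 2)
      obtain ⟨m', hm'⟩ := (H (P x (a + k + 1) - a) (by omega)).mp ⟨a + k + 1, by omega⟩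
      have h4 : P y (m₀ + k) < P y m' := by omega
      have h5 : m₀ + k < m' := (P_strictMono y).lt_iff_lt.mp h4
      have h6 : P y (m₀ + k + 1) ≤ P y m' := (P_strictMono y).le_iff_le.mpr (by omega)
      have h7 : P y (m₀ + k) < P y (m₀ + k + 1) := P_strictMono y (by omega)
      obtain ⟨n', hn'⟩ := (H (P y (m₀ + k + 1) - b) (by omega)).mpr ⟨m₀ + k + 1, by omega⟩
      have h8 : P x (a + k) < P x n' := by omega
      have h9 : P x (a + k + 1) ≤ P x n' :=
        (P_strictMono x).le_iff_le.mpr ((P_strictMono x).lt_iff_lt.mp h8)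
      omega
  have hd : ∀ k, d x (a + k + 2) = d y (m₀ + k + 2) := by
    intro k
    have h1 := key k
    have h2 : P x (a + k + 1) + b = P y (m₀ + k + 1) + a := key (k + 1)
    have h3 := P_succ x (a + k)
    have h4 := P_succ y (m₀ + k)
    omega
  have hm₀a : a = m₀ := by
    have := d_index_inj (hd 0)
    omega
  have hd' : ∀ k, d x (a + k + 2) = d y (a + k + 2) := by
    intro k
    have h1 := hd k
    rw [← hm₀a] at h1
    exact h1
  have hxy : x = y := by
    funext j
    have hn := hd' (j + 1)
    have hf : (d x (a + (j + 1) + 2)).factorization 3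
        = (d y (a + (j + 1) + 2)).factorization 3 := by rw [hn]
    rw [fact_d, fact_d] at hf
    simp only [fact_r_3] at hf
    exact binary_unique x y _ hf j (by omega)
  exact ⟨hxy, by rw [hxy]⟩
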